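/- Fix 1 ≤ p < ∞ and d ≥ 1. Let X₀ and Y₀ be nonempty finite subsets of ℝ^d and let ε > 0. Then there exist nonempty finite subsets X₁ and Y₁ of ℝ^d with |X₁| = |Y₁| such that: d_p^H(X₀, X₁) < ε; d_p^H(Y₀, Y₁) < ε; |d_p^H(X₀, Y₀) − W_p(X₁, Y₁)| < ε; and all pairwise Euclidean distances between distinct points of X₁ are pairwise distinct, and likewise all pairwise distances between distinct points of Y₁ are pairwise distinct. -/

import Mathlib

noncomputable section

variable {E : Type*} [NormedAddCommGroup E]

/-- `C` is a correspondence between the finite point sets `X` and `Y`: a set of pairs from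
`X × Y` whose projections onto `X` and onto `Y` are both surjective. -/
def IsCorrespondence (X Y : Finset E) (C : Finset (E × E)) : Prop :=
  (∀ c ∈ C, c.1 ∈ X ∧ c.2 ∈ Y) ∧
  (∀ x ∈ X, ∃ y, (x, y) ∈ C) ∧
  (∀ y ∈ Y, ∃ x, (x, y) ∈ C)

/-- The `p`-Hausdorff distance between two finite point sets: the infimum over
correspondences `C` of `(∑_{(x,y) ∈ C} ‖x − y‖^p)^{1/p}`. -/
def pHausdorffDist (p : ℝ) (X Y : Finset E) : ℝ :=
  sInf {r : ℝ | ∃ C : Finset (E × E), IsCorrespondence X Y C ∧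
    r = (∑ c ∈ C, dist c.1 c.2 ^ p) ^ (1 / p)}

/-- The `p`-Wasserstein distance between two finite point sets of the same cardinality:
the infimum over bijections `M : X → Y` of `(∑_{x ∈ X} ‖x − M x‖^p)^{1/p}`. -/
def pointSetWasserstein (p : ℝ) (X Y : Finset E) : ℝ :=
  sInf {r : ℝ | ∃ M : {x // x ∈ X} ≃ {y // y ∈ Y},
    r = (∑ x ∈ X.attach, dist (x : E) ((M x : E)) ^ p) ^ (1 / p)}

/-- All pairwise distances between distinct points of `X` are pairwise distinct: two
unordered pairs of distinct points realising the same distance must coincide. -/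
def PairwiseDistancesDistinct (X : Finset E) : Prop :=
  ∀ x₁ ∈ X, ∀ x₂ ∈ X, ∀ x₃ ∈ X, ∀ x₄ ∈ X,
    x₁ ≠ x₂ → x₃ ≠ x₄ → dist x₁ x₂ = dist x₃ x₄ → ({x₁, x₂} : Set E) = {x₃, x₄}



lemma lp_mono {ι : Type*} {p : ℝ} (hp0 : 0 < p) (s : Finset ι) {f g : ι → ℝ}
    (h0 : ∀ i ∈ s, 0 ≤ f i) (h : ∀ i ∈ s, f i ≤ g i) :
    (∑ i ∈ s, f i ^ p) ^ (1 / p) ≤ (∑ i ∈ s, g i ^ p) ^ (1 / p) :=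
  Real.rpow_le_rpow (Finset.sum_nonneg fun i hi => Real.rpow_nonneg (h0 i hi) _)
    (Finset.sum_le_sum fun i hi => Real.rpow_le_rpow (h0 i hi) (h i hi) hp0.le)
    (by positivity)

lemma lp_triangle3 {ι : Type*} {p : ℝ} (hp : 1 ≤ p) (s : Finset ι) (u u' v v' : ι → E) :
    (∑ i ∈ s, dist (u i) (v i) ^ p) ^ (1 / p) ≤
      (∑ i ∈ s, dist (u' i) (v' i) ^ p) ^ (1 / p) +
      (∑ i ∈ s, dist (u i) (u' i) ^ p) ^ (1 / p) +
      (∑ i ∈ s, dist (v i) (v' i) ^ p) ^ (1 / p) := by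
  have hp0 : 0 < p := lt_of_lt_of_le one_pos hp
  have step1 : (∑ i ∈ s, dist (u i) (v i) ^ p) ^ (1 / p) ≤
      (∑ i ∈ s, ((dist (u' i) (v' i) + dist (u i) (u' i)) + dist (v i) (v' i)) ^ p) ^ (1 / p) := by
    refine lp_mono hp0 s (fun i _ => dist_nonneg) (fun i _ => ?_)
    calc dist (u i) (v i) ≤ dist (u i) (u' i) + dist (u' i) (v i) := dist_triangle _ _ _
      _ ≤ dist (u i) (u' i) + (dist (u' i) (v' i) + dist (v' i) (v i)) := by
            have := dist_triangle (u' i) (v' i) (v i); linarith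
      _ = (dist (u' i) (v' i) + dist (u i) (u' i)) + dist (v i) (v' i) := by
            rw [dist_comm (v' i) (v i)]; ring
  refine step1.trans ?_
  have h2 := Real.Lp_add_le_of_nonneg (s := s)
      (f := fun i => dist (u' i) (v' i) + dist (u i) (u' i)) (g := fun i => dist (v i) (v' i)) hp
      (fun i _ => add_nonneg dist_nonneg dist_nonneg) (fun i _ => dist_nonneg)
  refine h2.trans ?_
  refine add_le_add ?_ le_rfl
  exact Real.Lp_add_le_of_nonneg (s := s) hp (fun i _ => dist_nonneg) (fun i _ => dist_nonneg)

lemma lp_le_card {ι : Type*} {p : ℝ} (hp : 1 ≤ p) (s : Finset ι) {f : ι → ℝ} {δ : ℝ} (hδ : 0 ≤ δ)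
    (h0 : ∀ i ∈ s, 0 ≤ f i) (h : ∀ i ∈ s, f i ≤ δ) :
    (∑ i ∈ s, f i ^ p) ^ (1 / p) ≤ (s.card : ℝ) ^ (1 / p) * δ := by
  have hp0 : 0 < p := lt_of_lt_of_le one_pos hp
  have h1 : (∑ i ∈ s, f i ^ p) ≤ (s.card : ℝ) * δ ^ p := by
    calc ∑ i ∈ s, f i ^ p ≤ ∑ _i ∈ s, δ ^ p :=
          Finset.sum_le_sum fun i hi => Real.rpow_le_rpow (h0 i hi) (h i hi) hp0.le
      _ = (s.card : ℝ) * δ ^ p := by rw [Finset.sum_const, nsmul_eq_mul]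
  calc (∑ i ∈ s, f i ^ p) ^ (1 / p) ≤ ((s.card : ℝ) * δ ^ p) ^ (1 / p) :=
        Real.rpow_le_rpow (Finset.sum_nonneg fun i hi => Real.rpow_nonneg (h0 i hi) _) h1
          (by positivity)
    _ = (s.card : ℝ) ^ (1 / p) * (δ ^ p) ^ (1 / p) :=
        Real.mul_rpow (by positivity) (by positivity)
    _ = (s.card : ℝ) ^ (1 / p) * δ := by
        rw [← Real.rpow_mul hδ, mul_one_div_cancel hp0.ne', Real.rpow_one]

lemma sum_image_le' {α β : Type*} [DecidableEq β] (s : Finset α) (f : α → β) (g : β → ℝ)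
    (hg : ∀ b, 0 ≤ g b) : ∑ b ∈ s.image f, g b ≤ ∑ a ∈ s, g (f a) := by
  classical
  induction s using Finset.induction_on with
  | empty => simp
  | @insert a s ha ih =>
    rw [Finset.image_insert, Finset.sum_insert ha]
    by_cases hfa : f a ∈ s.image f
    · rw [Finset.insert_eq_self.mpr hfa]
      exact le_add_of_nonneg_of_le (hg _) ih
    · rw [Finset.sum_insert hfa]
      exact add_le_add le_rfl ih

lemma pHausdorffDist_le_cost (p : ℝ) (X Y : Finset E) {C : Finset (E × E)}
    (hC : IsCorrespondence X Y C) :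
    pHausdorffDist p X Y ≤ (∑ c ∈ C, dist c.1 c.2 ^ p) ^ (1 / p) := by
  refine csInf_le ⟨0, ?_⟩ ⟨C, hC, rfl⟩
  rintro r ⟨C', -, rfl⟩
  exact Real.rpow_nonneg (Finset.sum_nonneg fun c _ => Real.rpow_nonneg dist_nonneg _) _

lemma isCorrespondence_product {X Y : Finset E} (hX : X.Nonempty) (hY : Y.Nonempty) :
    IsCorrespondence X Y (X ×ˢ Y) :=
  ⟨fun c hc => Finset.mem_product.mp hc,
   fun x hx => ⟨hY.choose, Finset.mem_product.mpr ⟨hx, hY.choose_spec⟩⟩,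
   fun y hy => ⟨hX.choose, Finset.mem_product.mpr ⟨hX.choose_spec, hy⟩⟩⟩

lemma exists_corr_lt (p : ℝ) {X Y : Finset E} (hX : X.Nonempty) (hY : Y.Nonempty)
    {θ : ℝ} (hθ : 0 < θ) :
    ∃ C, IsCorrespondence X Y C ∧
      (∑ c ∈ C, dist c.1 c.2 ^ p) ^ (1 / p) < pHausdorffDist p X Y + θ := by
  have hne : Set.Nonempty {r : ℝ | ∃ C : Finset (E × E), IsCorrespondence X Y C ∧
      r = (∑ c ∈ C, dist c.1 c.2 ^ p) ^ (1 / p)} :=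
    ⟨_, ⟨X ×ˢ Y, isCorrespondence_product hX hY, rfl⟩⟩
  obtain ⟨r, ⟨C, hC, rfl⟩, hlt⟩ := exists_lt_of_csInf_lt hne
    (lt_add_of_pos_right (pHausdorffDist p X Y) hθ)
  exact ⟨C, hC, hlt⟩

lemma pointSetWasserstein_le_cost (p : ℝ) (X Y : Finset E) (M : {x // x ∈ X} ≃ {y // y ∈ Y}) :
    pointSetWasserstein p X Y ≤ (∑ x ∈ X.attach, dist (x : E) ((M x : E)) ^ p) ^ (1 / p) := by
  refine csInf_le ⟨0, ?_⟩ ⟨M, rfl⟩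
  rintro r ⟨M', rfl⟩
  exact Real.rpow_nonneg (Finset.sum_nonneg fun _ _ => Real.rpow_nonneg dist_nonneg _) _

lemma le_pointSetWasserstein {p : ℝ} {X Y : Finset E} {b : ℝ}
    (hne : Nonempty ({x // x ∈ X} ≃ {y // y ∈ Y}))
    (h : ∀ M : {x // x ∈ X} ≃ {y // y ∈ Y},
      b ≤ (∑ x ∈ X.attach, dist (x : E) ((M x : E)) ^ p) ^ (1 / p)) :
    b ≤ pointSetWasserstein p X Y := by
  refine le_csInf ⟨_, hne.some, rfl⟩ ?_
  rintro r ⟨M, rfl⟩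
  exact h M

open MeasureTheory Metric

lemma pdd_insert [DecidableEq E] {X : Finset E} {z : E}
    (hPDD : PairwiseDistancesDistinct X)
    (hz2 : ∀ a ∈ X, ∀ c ∈ X, a ≠ c → dist z a ≠ dist z c)
    (hz3 : ∀ a ∈ X, ∀ b ∈ X, ∀ c ∈ X, dist z a ≠ dist b c) :
    PairwiseDistancesDistinct (insert z X) := by
  have key : ∀ a ∈ X, ∀ c ∈ X, dist z a = dist z c → a = c := by
    intro a ha c hc h
    by_contra hac
    exact hz2 a ha c hc hac h
  intro x₁ h₁ x₂ h₂ x₃ h₃ x₄ h₄ h12 h34 hdist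
  rw [Finset.mem_insert] at h₁ h₂ h₃ h₄
  rcases h₁ with h₁ | h₁
  · rcases h₂ with h₂ | h₂
    · exact absurd (h₁.trans h₂.symm) h12
    rcases h₃ with h₃ | h₃
    · rcases h₄ with h₄ | h₄
      · exact absurd (h₃.trans h₄.symm) h34
      · rw [h₁, h₃] at hdist ⊢
        rw [key x₂ h₂ x₄ h₄ hdist]
    · rcases h₄ with h₄ | h₄
      · rw [h₁, h₄] at hdist ⊢
        rw [dist_comm x₃ z] at hdist
        rw [key x₂ h₂ x₃ h₃ hdist, Set.pair_comm]
      · rw [h₁] at hdist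
        exact absurd hdist (hz3 x₂ h₂ x₃ h₃ x₄ h₄)
  · rcases h₂ with h₂ | h₂
    · rw [h₂] at hdist ⊢
      rw [dist_comm x₁ z] at hdist
      rcases h₃ with h₃ | h₃
      · rcases h₄ with h₄ | h₄
        · exact absurd (h₃.trans h₄.symm) h34
        · rw [h₃] at hdist ⊢
          rw [key x₁ h₁ x₄ h₄ hdist, Set.pair_comm]
      · rcases h₄ with h₄ | h₄
        · rw [h₄] at hdist ⊢
          rw [dist_comm x₃ z] at hdist
          rw [key x₁ h₁ x₃ h₃ hdist]
        · exact absurd hdist (hz3 x₁ h₁ x₃ h₃ x₄ h₄)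
    · rcases h₃ with h₃ | h₃
      · rcases h₄ with h₄ | h₄
        · exact absurd (h₃.trans h₄.symm) h34
        · rw [h₃] at hdist
          exact absurd hdist.symm (hz3 x₄ h₄ x₁ h₁ x₂ h₂)
      · rcases h₄ with h₄ | h₄
        · rw [h₄] at hdist
          rw [dist_comm x₃ z] at hdist
          exact absurd hdist.symm (hz3 x₃ h₃ x₁ h₁ x₂ h₂)
        · exact hPDD x₁ h₁ x₂ h₂ x₃ h₃ x₄ h₄ h12 h34 hdist

lemma euclidean_nontrivial {d : ℕ} (hd : 1 ≤ d) : Nontrivial (EuclideanSpace ℝ (Fin d)) := by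
  haveI : Nonempty (Fin d) := ⟨⟨0, hd⟩⟩
  infer_instance

lemma exists_perturbation {d : ℕ} (hd : 1 ≤ d) {ι : Type*} [DecidableEq ι] [DecidableEq (EuclideanSpace ℝ (Fin d))] (s : Finset ι)
    (b : ι → EuclideanSpace ℝ (Fin d)) {δ : ℝ} (hδ : 0 < δ) :
    ∃ f : ι → EuclideanSpace ℝ (Fin d), Set.InjOn f ↑s ∧ (∀ i ∈ s, dist (f i) (b i) < δ) ∧
      PairwiseDistancesDistinct (s.image f) := by
  classical
  haveI := euclidean_nontrivial hd
  induction s using Finset.induction_on with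
  | empty =>
      exact ⟨b, by simp, by simp, by intro x hx; rw [Finset.image_empty] at hx; exact absurd hx (Finset.notMem_empty x)⟩
  | @insert i s hi ih =>
      obtain ⟨f, hinj, hclose, hPDD⟩ := ih
      set X : Finset (EuclideanSpace ℝ (Fin d)) := s.image f with hX
      set bad : Set (EuclideanSpace ℝ (Fin d)) :=
        ((⋃ a ∈ (X : Set (EuclideanSpace ℝ (Fin d))), ⋃ c ∈ (X : Set (EuclideanSpace ℝ (Fin d))),
            if a = c then (∅ : Set (EuclideanSpace ℝ (Fin d)))
            else (AffineSubspace.perpBisector a c : Set (EuclideanSpace ℝ (Fin d)))) ∪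
         (⋃ a ∈ (X : Set (EuclideanSpace ℝ (Fin d))), ⋃ b' ∈ (X : Set (EuclideanSpace ℝ (Fin d))),
            ⋃ c ∈ (X : Set (EuclideanSpace ℝ (Fin d))), sphere a (dist b' c)) ∪
         (⋃ a ∈ (X : Set (EuclideanSpace ℝ (Fin d))), {a})) with hbad
      have hXc : (X : Set (EuclideanSpace ℝ (Fin d))).Countable := X.countable_toSet
      have hbad0 : volume bad = 0 := by
        rw [hbad]
        refine measure_union_null (measure_union_null ?_ ?_) ?_
        · rw [measure_biUnion_null_iff hXc]
          intro a _
          rw [measure_biUnion_null_iff hXc]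
          intro c _
          split_ifs with hac
          · simp
          · exact Measure.addHaar_affineSubspace volume _
              (fun h => hac (AffineSubspace.perpBisector_eq_top.mp h))
        · rw [measure_biUnion_null_iff hXc]; intro a _
          rw [measure_biUnion_null_iff hXc]; intro b' _
          rw [measure_biUnion_null_iff hXc]; intro c _
          exact Measure.addHaar_sphere volume _ _
        · rw [measure_biUnion_null_iff hXc]; intro a _
          exact measure_singleton a
      have hball : 0 < volume (ball (b i) δ) := measure_ball_pos volume _ hδ
      have hnsub : ¬ (ball (b i) δ ⊆ bad) := by
        intro h
        exact hball.ne' (le_antisymm (hbad0 ▸ measure_mono h) (zero_le))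
      obtain ⟨z, hzball, hzbad⟩ := Set.not_subset.mp hnsub
      rw [hbad, Set.mem_union, Set.mem_union] at hzbad
      push_neg at hzbad
      obtain ⟨⟨hzbis, hzsph⟩, hzpt⟩ := hzbad
      have hz1 : ∀ a ∈ X, z ≠ a := by
        intro a ha h
        exact hzpt (Set.mem_biUnion (Finset.mem_coe.mpr ha) (by simp [h]))
      have hz2 : ∀ a ∈ X, ∀ c ∈ X, a ≠ c → dist z a ≠ dist z c := by
        intro a ha c hc hac h
        refine hzbis (Set.mem_biUnion (Finset.mem_coe.mpr ha)
          (Set.mem_biUnion (Finset.mem_coe.mpr hc) ?_))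
        rw [if_neg hac]
        exact AffineSubspace.mem_perpBisector_iff_dist_eq.mpr h
      have hz3 : ∀ a ∈ X, ∀ b' ∈ X, ∀ c ∈ X, dist z a ≠ dist b' c := by
        intro a ha b' hb' c hc h
        exact hzsph (Set.mem_biUnion (Finset.mem_coe.mpr ha)
          (Set.mem_biUnion (Finset.mem_coe.mpr hb')
            (Set.mem_biUnion (Finset.mem_coe.mpr hc) (mem_sphere.mpr h))))
      refine ⟨Function.update f i z, ?_, ?_, ?_⟩
      · intro j hj k hk hjk
        simp only [Finset.coe_insert, Set.mem_insert_iff, Finset.mem_coe] at hj hk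
        rcases hj with rfl | hj <;> rcases hk with rfl | hk
        · rfl
        · exfalso
          rw [Function.update_self, Function.update_of_ne (ne_of_mem_of_not_mem hk hi)] at hjk
          exact hz1 _ (Finset.mem_image_of_mem f hk) hjk
        · exfalso
          rw [Function.update_self, Function.update_of_ne (ne_of_mem_of_not_mem hj hi)] at hjk
          exact hz1 _ (Finset.mem_image_of_mem f hj) hjk.symm
        · rw [Function.update_of_ne (ne_of_mem_of_not_mem hj hi),
            Function.update_of_ne (ne_of_mem_of_not_mem hk hi)] at hjk
          exact hinj (Finset.mem_coe.mpr hj) (Finset.mem_coe.mpr hk) hjk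
      · intro j hj
        rcases Finset.mem_insert.mp hj with rfl | hj
        · rw [Function.update_self]
          exact mem_ball.mp hzball
        · rw [Function.update_of_ne (ne_of_mem_of_not_mem hj hi)]
          exact hclose j hj
      · have himg : (insert i s).image (Function.update f i z) = insert z X := by
          rw [Finset.image_insert, Function.update_self]
          congr 1
          apply Finset.image_congr
          intro j hj
          exact Function.update_of_ne (ne_of_mem_of_not_mem hj hi) _ _
        rw [himg]
        exact pdd_insert hPDD hz2 hz3

/-- For `1 ≤ p < ∞`, `d ≥ 1`, nonempty finite `X₀, Y₀ ⊆ ℝ^d` and `ε > 0`,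
there are nonempty finite sets `X₁, Y₁ ⊆ ℝ^d` of equal cardinality with
`d_p^H(X₀,X₁) < ε`, `d_p^H(Y₀,Y₁) < ε`, `|d_p^H(X₀,Y₀) − W_p(X₁,Y₁)| < ε`, and all
pairwise distances within `X₁` distinct and all pairwise distances within `Y₁` distinct. -/
theorem exists_generic_approximation
    (p : ℝ) (hp : 1 ≤ p) (d : ℕ) (hd : 1 ≤ d)
    (X₀ Y₀ : Finset (EuclideanSpace ℝ (Fin d)))
    (hX₀ : X₀.Nonempty) (hY₀ : Y₀.Nonempty)
    (ε : ℝ) (hε : 0 < ε) :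
    ∃ X₁ Y₁ : Finset (EuclideanSpace ℝ (Fin d)),
      X₁.Nonempty ∧ Y₁.Nonempty ∧ X₁.card = Y₁.card ∧
      pHausdorffDist p X₀ X₁ < ε ∧
      pHausdorffDist p Y₀ Y₁ < ε ∧
      |pHausdorffDist p X₀ Y₀ - pointSetWasserstein p X₁ Y₁| < ε ∧
      PairwiseDistancesDistinct X₁ ∧ PairwiseDistancesDistinct Y₁ := by
  classical
  have hp0 : 0 < p := lt_of_lt_of_le one_pos hp
  obtain ⟨C, hC, hClt⟩ := exists_corr_lt p hX₀ hY₀ (show (0:ℝ) < ε/4 by linarith)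
  have hCne : C.Nonempty := by
    obtain ⟨x, hx⟩ := hX₀
    obtain ⟨y, hy⟩ := hC.2.1 x hx
    exact ⟨(x, y), hy⟩
  set n := C.card with hn
  set N := X₀.card * Y₀.card with hN
  have hnN : n ≤ N := by
    have hsub : C ⊆ X₀ ×ˢ Y₀ := fun c hc => Finset.mem_product.mpr (hC.1 c hc)
    calc n ≤ (X₀ ×ˢ Y₀).card := Finset.card_le_card hsub
      _ = N := Finset.card_product _ _
  set K : ℝ := (N : ℝ) ^ (1/p) + 1 with hK
  have hK0 : 0 < K := by positivity
  have hnK : (n : ℝ) ^ (1/p) ≤ K := by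
    have h1 : ((n:ℝ)) ^ (1/p) ≤ ((N:ℝ)) ^ (1/p) :=
      Real.rpow_le_rpow (by positivity) (by exact_mod_cast hnN) (by positivity)
    rw [hK]; linarith
  set δ : ℝ := ε / (8 * K) with hδdef
  have hδ : 0 < δ := by rw [hδdef]; positivity
  have hKδ : K * δ = ε / 8 := by
    rw [hδdef]; field_simp
  have hnδ : (n : ℝ) ^ (1/p) * δ ≤ ε / 8 := by
    rw [← hKδ]
    exact mul_le_mul_of_nonneg_right hnK hδ.le
  obtain ⟨f, hfinj, hfclose, hfPDD⟩ := exists_perturbation hd C Prod.fst hδ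
  obtain ⟨g, hginj, hgclose, hgPDD⟩ := exists_perturbation hd C Prod.snd hδ
  set X₁ := C.image f with hX₁
  set Y₁ := C.image g with hY₁
  have hcard : X₁.card = Y₁.card := by
    rw [hX₁, hY₁, Finset.card_image_of_injOn hfinj, Finset.card_image_of_injOn hginj]
  have hcardX : X₁.card = n := by rw [hX₁, Finset.card_image_of_injOn hfinj]
  -- the approximation correspondences
  have corrX : IsCorrespondence X₀ X₁ (C.image fun c => (c.1, f c)) := by
    refine ⟨?_, ?_, ?_⟩
    · intro c hc
      obtain ⟨c', hc', rfl⟩ := Finset.mem_image.mp hc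
      exact ⟨(hC.1 c' hc').1, Finset.mem_image_of_mem f hc'⟩
    · intro x hx
      obtain ⟨y, hy⟩ := hC.2.1 x hx
      exact ⟨f (x, y), Finset.mem_image_of_mem _ hy⟩
    · intro x hx
      obtain ⟨c, hc, rfl⟩ := Finset.mem_image.mp hx
      exact ⟨c.1, Finset.mem_image_of_mem _ hc⟩
  have corrY : IsCorrespondence Y₀ Y₁ (C.image fun c => (c.2, g c)) := by
    refine ⟨?_, ?_, ?_⟩
    · intro c hc
      obtain ⟨c', hc', rfl⟩ := Finset.mem_image.mp hc
      exact ⟨(hC.1 c' hc').2, Finset.mem_image_of_mem g hc'⟩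
    · intro y hy
      obtain ⟨x, hx⟩ := hC.2.2 y hy
      exact ⟨g (x, y), Finset.mem_image_of_mem _ hx⟩
    · intro y hy
      obtain ⟨c, hc, rfl⟩ := Finset.mem_image.mp hy
      exact ⟨c.2, Finset.mem_image_of_mem _ hc⟩
  have hA : pHausdorffDist p X₀ X₁ < ε := by
    have h1 : pHausdorffDist p X₀ X₁ ≤
        (∑ c ∈ C.image (fun c => (c.1, f c)), dist c.1 c.2 ^ p) ^ (1/p) :=
      pHausdorffDist_le_cost p X₀ X₁ corrX
    have h2 : (∑ c ∈ C.image (fun c : _ × _ => (c.1, f c)), dist c.1 c.2 ^ p)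
        = ∑ c ∈ C, dist c.1 (f c) ^ p := by
      refine Finset.sum_image ?_
      intro c hc c' hc' h
      exact hfinj (Finset.mem_coe.mpr hc) (Finset.mem_coe.mpr hc') (congrArg Prod.snd h)
    have h3 : (∑ c ∈ C, dist c.1 (f c) ^ p) ^ (1/p) ≤ (n:ℝ)^(1/p) * δ := by
      refine lp_le_card hp C hδ.le (fun c _ => dist_nonneg) (fun c hc => ?_)
      rw [dist_comm]
      exact (hfclose c hc).le
    rw [h2] at h1
    calc pHausdorffDist p X₀ X₁ ≤ (n:ℝ)^(1/p) * δ := h1.trans h3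
      _ ≤ ε/8 := hnδ
      _ < ε := by linarith
  have hB : pHausdorffDist p Y₀ Y₁ < ε := by
    have h1 : pHausdorffDist p Y₀ Y₁ ≤
        (∑ c ∈ C.image (fun c => (c.2, g c)), dist c.1 c.2 ^ p) ^ (1/p) :=
      pHausdorffDist_le_cost p Y₀ Y₁ corrY
    have h2 : (∑ c ∈ C.image (fun c : _ × _ => (c.2, g c)), dist c.1 c.2 ^ p)
        = ∑ c ∈ C, dist c.2 (g c) ^ p := by
      refine Finset.sum_image ?_
      intro c hc c' hc' h
      exact hginj (Finset.mem_coe.mpr hc) (Finset.mem_coe.mpr hc') (congrArg Prod.snd h)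
    have h3 : (∑ c ∈ C, dist c.2 (g c) ^ p) ^ (1/p) ≤ (n:ℝ)^(1/p) * δ := by
      refine lp_le_card hp C hδ.le (fun c _ => dist_nonneg) (fun c hc => ?_)
      rw [dist_comm]
      exact (hgclose c hc).le
    rw [h2] at h1
    calc pHausdorffDist p Y₀ Y₁ ≤ (n:ℝ)^(1/p) * δ := h1.trans h3
      _ ≤ ε/8 := hnδ
      _ < ε := by linarith
  -- equivalences
  have hfmem : ∀ c : {c // c ∈ C}, f c ∈ X₁ := fun c => Finset.mem_image_of_mem f c.2
  have hgmem : ∀ c : {c // c ∈ C}, g c ∈ Y₁ := fun c => Finset.mem_image_of_mem g c.2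
  set φf : {c // c ∈ C} ≃ {x // x ∈ X₁} := Equiv.ofBijective (fun c => ⟨f c, hfmem c⟩)
    ⟨fun c c' h => Subtype.ext (hfinj (Finset.mem_coe.mpr c.2) (Finset.mem_coe.mpr c'.2)
        (congrArg Subtype.val h)),
     fun x => by
      obtain ⟨c, hc, hfc⟩ := Finset.mem_image.mp x.2
      exact ⟨⟨c, hc⟩, Subtype.ext hfc⟩⟩ with hφf
  set φg : {c // c ∈ C} ≃ {y // y ∈ Y₁} := Equiv.ofBijective (fun c => ⟨g c, hgmem c⟩)
    ⟨fun c c' h => Subtype.ext (hginj (Finset.mem_coe.mpr c.2) (Finset.mem_coe.mpr c'.2)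
        (congrArg Subtype.val h)),
     fun y => by
      obtain ⟨c, hc, hgc⟩ := Finset.mem_image.mp y.2
      exact ⟨⟨c, hc⟩, Subtype.ext hgc⟩⟩ with hφg
  set M₀ : {x // x ∈ X₁} ≃ {y // y ∈ Y₁} := φf.symm.trans φg with hM₀
  have hφfval : ∀ c : {c // c ∈ C}, ((φf c : EuclideanSpace ℝ (Fin d))) = f c := fun c => rfl
  have hφgval : ∀ c : {c // c ∈ C}, ((φg c : EuclideanSpace ℝ (Fin d))) = g c := fun c => rfl
  have hxval : ∀ x : {x // x ∈ X₁}, (x : EuclideanSpace ℝ (Fin d)) = f (φf.symm x) := by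
    intro x
    conv_lhs => rw [← φf.apply_symm_apply x]
    exact hφfval _
  have hyval : ∀ y : {y // y ∈ Y₁}, (y : EuclideanSpace ℝ (Fin d)) = g (φg.symm y) := by
    intro y
    conv_lhs => rw [← φg.apply_symm_apply y]
    exact hφgval _
  have hcardu : (((Finset.univ : Finset {x // x ∈ X₁})).card : ℝ) = (n : ℝ) := by
    rw [Finset.card_univ, Fintype.card_coe, hcardX]
  -- upper bound on Wasserstein
  have hWle : pointSetWasserstein p X₁ Y₁ ≤ (∑ c ∈ C, dist (f c) (g c) ^ p) ^ (1/p) := by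
    have hsum : (∑ x ∈ X₁.attach, dist (x : EuclideanSpace ℝ (Fin d)) ((M₀ x : EuclideanSpace ℝ (Fin d))) ^ p)
        = ∑ c ∈ C, dist (f c) (g c) ^ p := by
      rw [← Finset.univ_eq_attach,
        ← Equiv.sum_comp φf (fun x => dist (x : EuclideanSpace ℝ (Fin d)) ((M₀ x : EuclideanSpace ℝ (Fin d))) ^ p),
        Finset.univ_eq_attach, ← Finset.sum_attach C (fun c => dist (f c) (g c) ^ p)]
      refine Finset.sum_congr rfl fun c _ => ?_
      have h2 : ((M₀ (φf c) : EuclideanSpace ℝ (Fin d))) = g c := by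
        rw [hM₀]
        simp only [Equiv.trans_apply, Equiv.symm_apply_apply]
        exact hφgval _
      rw [hφfval, h2]
    have := pointSetWasserstein_le_cost p X₁ Y₁ M₀
    rwa [hsum] at this
  have hM0cost : (∑ c ∈ C, dist (f c) (g c) ^ p) ^ (1/p) ≤
      (∑ c ∈ C, dist c.1 c.2 ^ p) ^ (1/p) + (n:ℝ)^(1/p)*δ + (n:ℝ)^(1/p)*δ := by
    refine (lp_triangle3 hp C f Prod.fst g Prod.snd).trans ?_
    refine add_le_add (add_le_add le_rfl ?_) ?_
    · exact lp_le_card hp C hδ.le (fun c _ => dist_nonneg) (fun c hc => (hfclose c hc).le)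
    · exact lp_le_card hp C hδ.le (fun c _ => dist_nonneg) (fun c hc => (hgclose c hc).le)
  -- lower bound on Wasserstein
  have hlower : pHausdorffDist p X₀ Y₀ - ε/4 ≤ pointSetWasserstein p X₁ Y₁ := by
    refine le_pointSetWasserstein ⟨M₀⟩ (fun M => ?_)
    set origX : {x // x ∈ X₁} → EuclideanSpace ℝ (Fin d) :=
      fun x => ((φf.symm x : (EuclideanSpace ℝ (Fin d)) × (EuclideanSpace ℝ (Fin d)))).1 with horigX
    set origY : {y // y ∈ Y₁} → EuclideanSpace ℝ (Fin d) :=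
      fun y => ((φg.symm y : (EuclideanSpace ℝ (Fin d)) × (EuclideanSpace ℝ (Fin d)))).2 with horigY
    set CM : Finset ((EuclideanSpace ℝ (Fin d)) × (EuclideanSpace ℝ (Fin d))) :=
      Finset.image (fun x => (origX x, origY (M x))) Finset.univ with hCM
    have corrM : IsCorrespondence X₀ Y₀ CM := by
      refine ⟨?_, ?_, ?_⟩
      · intro c hc
        obtain ⟨x, -, rfl⟩ := Finset.mem_image.mp hc
        exact ⟨(hC.1 _ (φf.symm x).2).1, (hC.1 _ (φg.symm (M x)).2).2⟩
      · intro x₀ hx₀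
        obtain ⟨y, hy⟩ := hC.2.1 x₀ hx₀
        refine ⟨origY (M (φf ⟨(x₀, y), hy⟩)), ?_⟩
        have heq : (x₀, origY (M (φf ⟨(x₀,y),hy⟩)))
            = (origX (φf ⟨(x₀,y),hy⟩), origY (M (φf ⟨(x₀,y),hy⟩))) := by
          rw [horigX]
          simp only [Equiv.symm_apply_apply]
        rw [heq]
        exact Finset.mem_image_of_mem _ (Finset.mem_univ _)
      · intro y₀ hy₀
        obtain ⟨x, hx⟩ := hC.2.2 y₀ hy₀
        refine ⟨origX (M.symm (φg ⟨(x, y₀), hx⟩)), ?_⟩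
        have heq : (origX (M.symm (φg ⟨(x,y₀),hx⟩)), y₀)
            = (origX (M.symm (φg ⟨(x,y₀),hx⟩)), origY (M (M.symm (φg ⟨(x,y₀),hx⟩)))) := by
          rw [Equiv.apply_symm_apply, horigY]
          simp only [Equiv.symm_apply_apply]
        rw [heq]
        exact Finset.mem_image_of_mem _ (Finset.mem_univ _)
    have h1 : pHausdorffDist p X₀ Y₀ ≤ (∑ c ∈ CM, dist c.1 c.2 ^ p) ^ (1/p) :=
      pHausdorffDist_le_cost p X₀ Y₀ corrM
    have h2 : (∑ c ∈ CM, dist c.1 c.2 ^ p)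
        ≤ ∑ x ∈ (Finset.univ : Finset {x // x ∈ X₁}), dist (origX x) (origY (M x)) ^ p := by
      rw [hCM]
      exact sum_image_le' _ _ _ (fun c => Real.rpow_nonneg dist_nonneg _)
    have h2' : (∑ c ∈ CM, dist c.1 c.2 ^ p) ^ (1/p)
        ≤ (∑ x ∈ (Finset.univ : Finset {x // x ∈ X₁}), dist (origX x) (origY (M x)) ^ p) ^ (1/p) :=
      Real.rpow_le_rpow (Finset.sum_nonneg fun c _ => Real.rpow_nonneg dist_nonneg _) h2
        (by positivity)
    have h3 : (∑ x ∈ (Finset.univ : Finset {x // x ∈ X₁}), dist (origX x) (origY (M x)) ^ p) ^ (1/p) ≤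
        (∑ x ∈ (Finset.univ : Finset {x // x ∈ X₁}),
          dist (x : EuclideanSpace ℝ (Fin d)) ((M x : EuclideanSpace ℝ (Fin d))) ^ p) ^ (1/p)
          + (n:ℝ)^(1/p)*δ + (n:ℝ)^(1/p)*δ := by
      refine (lp_triangle3 hp Finset.univ origX (fun x => (x : EuclideanSpace ℝ (Fin d)))
        (fun x => origY (M x)) (fun x => ((M x : EuclideanSpace ℝ (Fin d))))).trans ?_
      refine add_le_add (add_le_add le_rfl ?_) ?_
      · refine (lp_le_card hp _ hδ.le (fun _ _ => dist_nonneg) (fun x _ => ?_)).trans ?_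
        · rw [horigX, hxval x, dist_comm]
          exact (hfclose _ (φf.symm x).2).le
        · rw [hcardu]
      · refine (lp_le_card hp _ hδ.le (fun _ _ => dist_nonneg) (fun x _ => ?_)).trans ?_
        · rw [horigY, hyval (M x), dist_comm]
          exact (hgclose _ (φg.symm (M x)).2).le
        · rw [hcardu]
    have h4 : (∑ x ∈ (Finset.univ : Finset {x // x ∈ X₁}),
          dist (x : EuclideanSpace ℝ (Fin d)) ((M x : EuclideanSpace ℝ (Fin d))) ^ p)
        = ∑ x ∈ X₁.attach, dist (x : EuclideanSpace ℝ (Fin d)) ((M x : EuclideanSpace ℝ (Fin d))) ^ p := by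
      rw [Finset.univ_eq_attach]
    rw [h4] at h3
    have := h1.trans (h2'.trans h3)
    linarith [hnδ]
  -- conclude
  have habs : |pHausdorffDist p X₀ Y₀ - pointSetWasserstein p X₁ Y₁| < ε := by
    have hW1 : pointSetWasserstein p X₁ Y₁ < pHausdorffDist p X₀ Y₀ + ε/4 + (ε/8 + ε/8) := by
      have := hWle.trans hM0cost
      have h5 : (∑ c ∈ C, dist c.1 c.2 ^ p) ^ (1/p) < pHausdorffDist p X₀ Y₀ + ε/4 := hClt
      linarith [hnδ]
    rw [abs_sub_lt_iff]
    constructor <;> linarith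
  exact ⟨X₁, Y₁, hCne.image f, hCne.image g, hcard, hA, hB, habs, hfPDD, hgPDD⟩
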